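/- Let γ: F → F⊗_A F be a D-connection and ∇ the induced operator on R_+(F). Define T_0 := id_F and T_n := (1/n!)∇^n|_F : F → R^{n+1}(F). Then for every i ≥ 1, all a ∈ A, and all m ∈ F: T_i(am) = a·T_i(m) + Σ_{j=1}^{i} (1/j)·T_{j-1}(D(a))·T_{i-j}(m), where products are taken in R(F). In particular (T_0, T_1, T_2, …) is an extended D-connection. -/

import Mathlib

open scoped TensorProduct

noncomputable section

variable (A : Type) [CommRing A]
variable (F : Type) [AddCommGroup F] [Module A F]

/-- `n`-fold tensor power `T^n(F)`. -/
abbrev TPow (n : ℕ) := PiTensorProduct A (fun _ : Fin n => F)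

/-- The submodule of symmetry relations. -/
def symRel (n : ℕ) : Submodule A (TPow A F n) :=
  Submodule.span A
    {x | ∃ (m : Fin n → F) (e : Equiv.Perm (Fin n)),
      x = PiTensorProduct.tprod A m - PiTensorProduct.tprod A (m ∘ e)}

/-- Symmetric power `S^n(F)`. -/
abbrev SymPow (n : ℕ) := TPow A F n ⧸ symRel A F n

/-- Class of the word `m₀ ⋯ m_{n-1}` in `S^n(F)`. -/
def mkS {n : ℕ} (m : Fin n → F) : SymPow A F n :=
  Submodule.Quotient.mk (PiTensorProduct.tprod A m)

/-- Class of a list of elements of `F` in the symmetric power. -/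
def mkSL (l : List F) : SymPow A F l.length := mkS A F l.get

/-- `RPow A F n` is `R^{n+1}(F) = S^n(F) ⊗_A F`. -/
abbrev RPow (n : ℕ) := SymPow A F n ⊗[A] F

/-- Class of the word `m₀ ⋯ m_n` in `R^{n+1}(F) = S^n(F) ⊗ F`. -/
def mkR {n : ℕ} (m : Fin (n + 1) → F) : RPow A F n :=
  mkS A F (fun i : Fin n => m i.castSucc) ⊗ₜ[A] m (Fin.last n)

/-- The `i`-th "rotation" of the word `m` appearing in the definition of the
switch operator: `m_n m_{n-1} ⋯ m_{n-i+1} m_0 m_1 ⋯ m_{n-i}` (0-indexed). -/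
def rot {n : ℕ} (m : Fin (n + 1) → F) (i : ℕ) : Fin (n + 1) → F := fun j =>
  if j.val < i then m ⟨n - j.val, by have := j.isLt; omega⟩
  else m ⟨j.val - i, by have := j.isLt; omega⟩

/-- `σ` is the switch operator on `R^{n+1}(F)`:
`σ(m_0⋯m_n) = ∑_{i=1}^{n} m_n m_{n-1}⋯m_{n-i+1} m_0 m_1 ⋯ m_{n-i}`. -/
def IsSwitch (n : ℕ) (σ : RPow A F n →ₗ[A] RPow A F n) : Prop :=
  ∀ m : Fin (n + 1) → F,
    σ (mkR A F m) = ∑ i ∈ Finset.Icc 1 n, mkR A F (rot F m i)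

/-- `K^{n+1}(F) = σ*(R^{n+1}(F))`, described by its generators `σ*(m_0⋯m_n)`. -/
def KSub (n : ℕ) : Submodule A (RPow A F n) :=
  Submodule.span A
    {x | ∃ m : Fin (n + 1) → F,
      x = mkR A F m + ∑ i ∈ Finset.Icc 1 n, mkR A F (rot F m i)}

/-- `K²(F) ⊆ T²(F) = F ⊗ F`: the kernel of `T²(F) → Λ²(F)`, i.e. the image of `1 + σ`. -/
def K2Sub : Submodule A (F ⊗[A] F) :=
  Submodule.span A {x | ∃ u v : F, x = u ⊗ₜ[A] v + v ⊗ₜ[A] u}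

/-- The word `m₀ ⋯ m_{p-1} u m'₀ ⋯ m'_{q-1}`. -/
def joinWord {p q : ℕ} (m : Fin p → F) (u : F) (m' : Fin q → F) :
    Fin (p + q + 1) → F := fun j =>
  if h : j.val < p then m ⟨j.val, h⟩
  else if _h2 : j.val < p + 1 then u
  else m' ⟨j.val - (p + 1), by have := j.isLt; omega⟩

/-- The concatenated word `m₀ ⋯ m_{p-1} m'₀ ⋯ m'_{q-1}`. -/
def appendWord {p q : ℕ} (m : Fin p → F) (m' : Fin q → F) : Fin (p + q) → F := fun j =>
  if h : j.val < p then m ⟨j.val, h⟩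
  else m' ⟨j.val - p, by have := j.isLt; omega⟩

/-- `mul` is the multiplication `R^{p+1}(F) × R^{q+1}(F) → R^{p+q+2}(F)` of the graded
algebra `R(F)`, recorded with values in `∏ₖ R^{k+1}(F)`:
`(s ⊗ u)·(s' ⊗ v) = (s u s') ⊗ v`. -/
def IsMulR (mul : ∀ p q, RPow A F p →ₗ[A] RPow A F q →ₗ[A] ∀ k, RPow A F k) : Prop :=
  ∀ (p q : ℕ) (m : Fin p → F) (u : F) (m' : Fin q → F) (v : F),
    mul p q (mkS A F m ⊗ₜ[A] u) (mkS A F m' ⊗ₜ[A] v)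
      = Pi.single (p + q + 1) (mkS A F (joinWord F m u m') ⊗ₜ[A] v)

/-- `mul` is the multiplication `S^p(F) × S^q(F) → S^{p+q}(F)` of the symmetric algebra,
recorded with values in `∏ₖ S^k(F)`. -/
def IsMulS (mul : ∀ p q, SymPow A F p →ₗ[A] SymPow A F q →ₗ[A] ∀ k, SymPow A F k) : Prop :=
  ∀ (p q : ℕ) (m : Fin p → F) (m' : Fin q → F),
    mul p q (mkS A F m) (mkS A F m') = Pi.single (p + q) (mkS A F (appendWord F m m'))

/-- `π` is the family of natural maps `R^{n+1}(F) = S^n(F) ⊗ F → S^{n+1}(F)`. -/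
def IsPi (π : ∀ n, RPow A F n →ₗ[A] SymPow A F (n + 1)) : Prop :=
  ∀ (n : ℕ) (m : Fin n → F) (v : F),
    π n (mkS A F m ⊗ₜ[A] v) = mkS A F (Fin.snoc m v)

/-- `T = (T₀, T₁, …)` is a (full) extended `D`-connection:  `T₀ = id_F` (under
`F ≅ R¹(F)`), and `T_i(am) = a T_i(m) + ∑_{j=1}^i (1/j) T_{j-1}(D a) T_{i-j}(m)`. -/
def IsExtConn [Algebra ℚ A] (D : A → F)
    (mul : ∀ p q, RPow A F p →ₗ[A] RPow A F q →ₗ[A] ∀ k, RPow A F k)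
    (T : ∀ i, F →+ RPow A F i) : Prop :=
  (∀ m : F, T 0 m = mkS A F (fun i : Fin 0 => i.elim0) ⊗ₜ[A] m) ∧
  ∀ (i : ℕ), 1 ≤ i → ∀ (a : A) (m : F),
    Pi.single i (T i (a • m))
      = Pi.single i (a • T i m)
        + ∑ j ∈ Finset.Icc 1 i,
            algebraMap ℚ A (1 / (j : ℚ)) •
              mul (j - 1) (i - j) (T (j - 1) (D a)) (T (i - j) m)

/-- `T = (T₀, …, T_N)` is an extended `D`-connection up to order `N`. -/
def IsExtConnTo [Algebra ℚ A] (D : A → F)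
    (mul : ∀ p q, RPow A F p →ₗ[A] RPow A F q →ₗ[A] ∀ k, RPow A F k)
    (N : ℕ) (T : ∀ i, F →+ RPow A F i) : Prop :=
  (∀ m : F, T 0 m = mkS A F (fun i : Fin 0 => i.elim0) ⊗ₜ[A] m) ∧
  ∀ (i : ℕ), 1 ≤ i → i ≤ N → ∀ (a : A) (m : F),
    Pi.single i (T i (a • m))
      = Pi.single i (a • T i m)
        + ∑ j ∈ Finset.Icc 1 i,
            algebraMap ℚ A (1 / (j : ℚ)) •
              mul (j - 1) (i - j) (T (j - 1) (D a)) (T (i - j) m)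

/-- The wedge map `F ⊗_A F →  Λ(F)`, `u ⊗ v ↦ u ∧ v`; an element of `F ⊗ F` maps to
zero in `Λ²(F)` iff its image under this map is zero. -/
def wedgeMap : F ⊗[A] F →ₗ[A] ExteriorAlgebra A F :=
  TensorProduct.lift
    ((LinearMap.mul A (ExteriorAlgebra A F)).compl₁₂ (ExteriorAlgebra.ι A) (ExteriorAlgebra.ι A))


/-- The word obtained from `m₀ ⋯ m_n` by replacing the letter `m_i` by the two
letters `u v`. -/
def insWord {n : ℕ} (m : Fin (n + 1) → F) (i : Fin (n + 1)) (u v : F) :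
    Fin (n + 2) → F := fun j =>
  if _h1 : j.val < i.val then m ⟨j.val, by have := i.isLt; omega⟩
  else if j.val = i.val then u
  else if j.val = i.val + 1 then v
  else m ⟨j.val - 1, by have := j.isLt; omega⟩

section Toolkit

variable {A F}

/-- transport along an index equality -/
def castR {n n' : ℕ} (h : n = n') : RPow A F n ≃ₗ[A] RPow A F n' :=
  h ▸ LinearEquiv.refl A (RPow A F n)

@[simp] lemma castR_rfl {n : ℕ} (x : RPow A F n) : castR rfl x = x := rfl

lemma mkS_comp_perm {n : ℕ} (m : Fin n → F) (e : Equiv.Perm (Fin n)) :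
    mkS A F (m ∘ e) = mkS A F m := by
  unfold mkS
  rw [Submodule.Quotient.eq]
  apply Submodule.subset_span
  exact ⟨m ∘ e, e⁻¹, by rw [show (m ∘ e) ∘ ⇑e⁻¹ = m by funext j; simp]⟩

lemma mkS_update_smul {n : ℕ} (m : Fin n → F) (j : Fin n) (a : A) (x : F) :
    mkS A F (Function.update m j (a • x)) = a • mkS A F (Function.update m j x) := by
  unfold mkS
  rw [MultilinearMap.map_update_smul]
  rfl

lemma mkR_smul_last {n : ℕ} (m : Fin (n + 1) → F) (a : A) :
    a • mkR A F m = mkR A F (Function.update m (Fin.last n) (a • m (Fin.last n))) := by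
  unfold mkR
  rw [show (fun i : Fin n => Function.update m (Fin.last n) (a • m (Fin.last n)) i.castSucc)
      = fun i : Fin n => m i.castSucc by
    funext i; exact Function.update_of_ne (Fin.ne_of_lt (Fin.castSucc_lt_last i)) _ m]
  rw [Function.update_self]
  exact (TensorProduct.tmul_smul a _ _).symm

lemma rpow_induction {k : ℕ} {P : RPow A F k → Prop} (h0 : P 0)
    (hgen : ∀ m : Fin (k + 1) → F, P (mkR A F m))
    (hadd : ∀ x y, P x → P y → P (x + y)) (x : RPow A F k) : P x := by
  induction x using TensorProduct.induction_on with
  | zero => exact h0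
  | tmul s v =>
    obtain ⟨t, rfl⟩ := Submodule.Quotient.mk_surjective _ s
    induction t using PiTensorProduct.induction_on with
    | smul_tprod a mf =>
      have : (Submodule.Quotient.mk (a • PiTensorProduct.tprod A mf) :
          SymPow A F k) ⊗ₜ[A] v = mkR A F (Fin.snoc mf (a • v)) := by
        rw [Submodule.Quotient.mk_smul]
        unfold mkR
        have h1 : (fun i : Fin k => (Fin.snoc mf (a • v) : Fin (k+1) → F) i.castSucc) = mf := by
          funext i; simp
        have h2 : (Fin.snoc mf (a • v) : Fin (k+1) → F) (Fin.last k) = a • v := by simp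
        rw [h1, h2, TensorProduct.smul_tmul]
        rfl
      rw [this]; exact hgen _
    | add t1 t2 ih1 ih2 =>
      rw [Submodule.Quotient.mk_add, TensorProduct.add_tmul]
      exact hadd _ _ ih1 ih2
  | add x y ih1 ih2 => exact hadd _ _ ih1 ih2

end Toolkit
set_option maxRecDepth 10000

section Main

variable {A F}

/-- append of two "R-words" -/
def appW {p q : ℕ} (w : Fin (p + 1) → F) (w' : Fin (q + 1) → F) :
    Fin (p + q + 1 + 1) → F := fun j =>
  if h : j.val < p + 1 then w ⟨j.val, h⟩
  else w' ⟨j.val - (p + 1), by have := j.isLt; omega⟩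

lemma castR_mkR {n n' : ℕ} (h : n = n') (m : Fin (n + 1) → F) :
    castR (A := A) h (mkR A F m)
      = mkR A F (fun i : Fin (n' + 1) => m (Fin.cast (by omega) i)) := by
  subst h; rfl

lemma T_cast {k k' : ℕ} (h : k = k') (T : ∀ i, F →+ RPow A F i) (x : F) :
    castR h (T k x) = T k' x := by subst h; rfl

lemma Del_cast {k k' : ℕ} (h : k = k') (Del : ∀ k, RPow A F k →+ RPow A F (k + 1))
    (x : RPow A F k) :
    Del k' (castR h x) = castR (by rw [h]) (Del k x) := by subst h; rfl

section Mul
variable (mul : ∀ p q, RPow A F p →ₗ[A] RPow A F q →ₗ[A] ∀ k, RPow A F k)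

/-- value of the multiplication in the canonical degree -/
def mulv (p q : ℕ) (x : RPow A F p) (y : RPow A F q) : RPow A F (p + q + 1) :=
  mul p q x y (p + q + 1)

lemma mul_zero_left (p q : ℕ) (y : RPow A F q) : mul p q 0 y = 0 := by
  rw [map_zero]; rfl

lemma mul_add_left (p q : ℕ) (x1 x2 : RPow A F p) (y : RPow A F q) :
    mul p q (x1 + x2) y = mul p q x1 y + mul p q x2 y := by
  rw [map_add]; rfl

lemma mul_single (hmul : IsMulR A F mul) (p q : ℕ) (x : RPow A F p) (y : RPow A F q) :
    mul p q x y = Pi.single (p + q + 1) (mulv mul p q x y) := by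
  induction x using rpow_induction with
  | h0 =>
    rw [mul_zero_left, show mulv mul p q 0 y = 0 from congrFun (mul_zero_left mul p q y) _,
      Pi.single_zero]
  | hadd x1 x2 ih1 ih2 =>
    rw [mul_add_left, ih1, ih2,
      show mulv mul p q (x1 + x2) y = mulv mul p q x1 y + mulv mul p q x2 y from
        congrFun (mul_add_left mul p q x1 x2 y) _, Pi.single_add]
  | hgen w =>
    induction y using rpow_induction with
    | h0 =>
      rw [map_zero, show mulv mul p q (mkR A F w) 0 = 0 by
        rw [mulv, map_zero]; rfl, Pi.single_zero]
    | hadd y1 y2 ih1 ih2 =>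
      rw [map_add, ih1, ih2,
        show mulv mul p q (mkR A F w) (y1 + y2)
            = mulv mul p q (mkR A F w) y1 + mulv mul p q (mkR A F w) y2 by
          rw [mulv, map_add]; rfl, Pi.single_add]
    | hgen w' =>
      have h' : mul p q (mkR A F w) (mkR A F w')
          = Pi.single (p + q + 1)
              (mkS A F (joinWord F (fun i => w i.castSucc) (w (Fin.last p))
                (fun i => w' i.castSucc)) ⊗ₜ[A] w' (Fin.last q)) :=
        hmul p q _ _ _ _
      rw [h']
      congr 1
      rw [show mulv mul p q (mkR A F w) (mkR A F w')
          = mul p q (mkR A F w) (mkR A F w') (p + q + 1) from rfl, h', Pi.single_eq_same]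

lemma mulv_mkR (hmul : IsMulR A F mul) (p q : ℕ) (w : Fin (p + 1) → F) (w' : Fin (q + 1) → F) :
    mulv mul p q (mkR A F w) (mkR A F w') = mkR A F (appW w w') := by
  have h' : mul p q (mkR A F w) (mkR A F w')
      = Pi.single (p + q + 1)
          (mkS A F (joinWord F (fun i => w i.castSucc) (w (Fin.last p))
            (fun i => w' i.castSucc)) ⊗ₜ[A] w' (Fin.last q)) :=
    hmul p q _ _ _ _
  rw [show mulv mul p q (mkR A F w) (mkR A F w')
      = mul p q (mkR A F w) (mkR A F w') (p + q + 1) from rfl, h', Pi.single_eq_same]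
  unfold mkR
  congr 1
  · congr 1
    funext j
    unfold joinWord appW
    simp only [Fin.coe_castSucc]
    rcases Nat.lt_trichotomy j.val p with h | h | h
    · rw [dif_pos h, dif_pos (by omega)]
      show w _ = w _
      exact congrArg w (Fin.ext (by simp))
    · rw [dif_neg (by omega), dif_pos (by omega), dif_pos (by omega)]
      exact congrArg w (Fin.ext (by simp [Fin.last]; try omega))
    · rw [dif_neg (by omega), dif_neg (by omega), dif_neg (by omega)]
      show w' _ = w' _
      exact congrArg w' (Fin.ext (by simp; try omega))
  · unfold appW
    rw [dif_neg (by simp [Fin.last]; try omega)]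
    exact congrArg w' (Fin.ext (by simp [Fin.last]; try omega))

lemma mulv_cast {p p' q q' : ℕ} (hp : p = p') (hq : q = q')
    (x : RPow A F p) (y : RPow A F q) :
    mulv mul p' q' (castR hp x) (castR hq y) = castR (by rw [hp, hq]) (mulv mul p q x y) := by
  subst hp; subst hq; rfl

end Mul
end Main
section L1

variable {A F} [Algebra ℚ A] {B : Type} [CommRing B] [Algebra B A]
  [Module B F] [IsScalarTower B A F]

lemma D_alg (D : Derivation B A F) (r : ℚ) : D ((algebraMap ℚ A) r) = 0 := by
  set c := (algebraMap ℚ A) r with hc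
  have hden : (r.den : ℕ) • D c = 0 := by
    have h0 : D ((r.den : ℕ) • c) = (r.den : ℕ) • D c := map_nsmul (D : A →ₗ[B] F) r.den c
    rw [← h0, nsmul_eq_mul, show ((r.den : ℕ) : A) = algebraMap ℚ A ((r.den : ℕ) : ℚ) from
      (map_natCast _ _).symm, hc, ← map_mul,
      show ((r.den : ℕ) : ℚ) * r = ((r.num : ℤ) : ℚ) from by
        rw [mul_comm, Rat.mul_den_eq_num],
      show (algebraMap ℚ A) ((r.num : ℤ) : ℚ) = ((r.num : ℤ) : A) from map_intCast _ _,
      Derivation.map_intCast]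
  have hden' : ((r.den : ℕ) : A) • D c = 0 := by
    rw [Nat.cast_smul_eq_nsmul]; exact hden
  have h2 : D c = algebraMap ℚ A ((r.den : ℚ)⁻¹) • (((r.den : ℕ) : A) • D c) := by
    rw [smul_smul, show ((r.den : ℕ) : A) = algebraMap ℚ A ((r.den : ℕ) : ℚ) from
      (map_natCast _ _).symm, ← map_mul, inv_mul_cancel₀ (by exact_mod_cast r.den_ne_zero),
      map_one, one_smul]
  rw [h2, hden', smul_zero]

lemma mkR_front_perm {n : ℕ} (w w' : Fin (n + 1) → F) (e : Equiv.Perm (Fin n))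
    (h1 : (fun i : Fin n => w i.castSucc) ∘ e = fun i : Fin n => w' i.castSucc)
    (h2 : w (Fin.last n) = w' (Fin.last n)) :
    mkR A F w = mkR A F w' := by
  unfold mkR
  rw [← mkS_comp_perm (A := A) (fun i : Fin n => w i.castSucc) e, h1, h2]

end L1
section L1b

variable {A F}

lemma ins_castSucc_smul
    (ins : ∀ (k : ℕ) (m : Fin (k + 1) → F) (i : Fin (k + 1)), F ⊗[A] F →ₗ[A] RPow A F (k + 1))
    (hins : ∀ k m i u v, ins k m i (u ⊗ₜ[A] v) = mkR A F (insWord F m i u v))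
    (k : ℕ) (m : Fin (k + 1) → F) (a : A) (j : Fin k) :
    ins k (Function.update m (Fin.last k) (a • m (Fin.last k))) j.castSucc
      = a • ins k m j.castSucc := by
  apply TensorProduct.ext'
  intro u v
  rw [hins, LinearMap.smul_apply, hins, mkR_smul_last]
  congr 1
  funext x
  simp only [insWord, Function.update_apply, Fin.coe_castSucc, Fin.val_last, Fin.ext_iff,
    Fin.mk.injEq]
  split_ifs <;>
    first
      | rfl
      | omega
      | (exact congrArg m (Fin.ext (by omega)))
      | (congr 1; exact congrArg m (Fin.ext (by omega)))

lemma ins_last_update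
    (ins : ∀ (k : ℕ) (m : Fin (k + 1) → F) (i : Fin (k + 1)), F ⊗[A] F →ₗ[A] RPow A F (k + 1))
    (hins : ∀ k m i u v, ins k m i (u ⊗ₜ[A] v) = mkR A F (insWord F m i u v))
    (k : ℕ) (m : Fin (k + 1) → F) (z : F) :
    ins k (Function.update m (Fin.last k) z) (Fin.last k) = ins k m (Fin.last k) := by
  apply TensorProduct.ext'
  intro u v
  rw [hins, hins]
  congr 1
  funext x
  simp only [insWord, Function.update_apply, Fin.val_last, Fin.ext_iff, Fin.mk.injEq]
  split_ifs <;>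
    first
      | rfl
      | omega
      | (exact congrArg m (Fin.ext (by omega)))

end L1b
section L1c

variable {A F} [Algebra ℚ A] {B : Type} [CommRing B] [Algebra B A]
  [Module B F] [IsScalarTower B A F]

lemma T0_mkR (T : ∀ i, F →+ RPow A F i)
    (hT0 : ∀ m : F, T 0 m = mkS A F (fun i : Fin 0 => i.elim0) ⊗ₜ[A] m) (x : F) :
    T 0 x = mkR A F (fun _ : Fin 1 => x) := by
  rw [hT0]
  unfold mkR
  congr 1
  congr 1
  funext i
  exact i.elim0

/-- The `D a`-term: multiplication on the left by `D a` matches insertion at the last slot. -/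
lemma mulv_T0_mkR
    (D : Derivation B A F)
    (ins : ∀ (k : ℕ) (m : Fin (k + 1) → F) (i : Fin (k + 1)), F ⊗[A] F →ₗ[A] RPow A F (k + 1))
    (hins : ∀ k m i u v, ins k m i (u ⊗ₜ[A] v) = mkR A F (insWord F m i u v))
    (mul : ∀ p q, RPow A F p →ₗ[A] RPow A F q →ₗ[A] ∀ k, RPow A F k)
    (hmul : IsMulR A F mul)
    (T : ∀ i, F →+ RPow A F i)
    (hT0 : ∀ m : F, T 0 m = mkS A F (fun i : Fin 0 => i.elim0) ⊗ₜ[A] m)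
    (k : ℕ) (a : A) (m : Fin (k + 1) → F) :
    castR (show 0 + k + 1 = k + 1 by omega) (mulv mul 0 k (T 0 (D a)) (mkR A F m))
      = ins k m (Fin.last k) ((D a) ⊗ₜ[A] m (Fin.last k)) := by
  rw [T0_mkR T hT0, mulv_mkR mul hmul, castR_mkR, hins]
  apply mkR_front_perm (e := finRotate (k + 1))
  · funext j
    simp only [Function.comp_apply, finRotate_succ_apply, appW, insWord,
      Fin.coe_castSucc, Fin.val_last, Fin.val_add_one, Fin.coe_cast, Fin.ext_iff]
    by_cases hjk : (j : ℕ) = k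
    · simp only [if_pos hjk]
      rw [dif_pos (show (0 : ℕ) < 0 + 1 by omega), dif_neg (by omega)]
    · simp only [if_neg hjk]
      have hlt : (j : ℕ) < k := by have := j.isLt; omega
      rw [dif_neg (by omega), dif_pos hlt]
      exact congrArg m (Fin.ext (by simp only []; omega))
  · simp only [appW, insWord, Fin.val_last, Fin.coe_cast]
    split_ifs <;>
      first
        | rfl
        | omega
        | (exact congrArg m (Fin.ext (by simp only [Fin.val_last]; try omega)))

end L1c
section L1d

variable {A F} [Algebra ℚ A] {B : Type} [CommRing B] [Algebra B A]
  [Module B F] [IsScalarTower B A F]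

lemma Del_smul
    (D : Derivation B A F)
    (γ : F →+ F ⊗[A] F)
    (hγ : ∀ (a : A) (m : F), γ (a • m) = D a ⊗ₜ[A] m + a • γ m)
    (ins : ∀ (k : ℕ) (m : Fin (k + 1) → F) (i : Fin (k + 1)), F ⊗[A] F →ₗ[A] RPow A F (k + 1))
    (hins : ∀ k m i u v, ins k m i (u ⊗ₜ[A] v) = mkR A F (insWord F m i u v))
    (Del : ∀ k, RPow A F k →+ RPow A F (k + 1))
    (hDel : ∀ (k : ℕ) (m : Fin (k + 1) → F),
      Del k (mkR A F m) = ∑ i : Fin (k + 1), ins k m i (γ (m i)))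
    (mul : ∀ p q, RPow A F p →ₗ[A] RPow A F q →ₗ[A] ∀ k, RPow A F k)
    (hmul : IsMulR A F mul)
    (T : ∀ i, F →+ RPow A F i)
    (hT0 : ∀ m : F, T 0 m = mkS A F (fun i : Fin 0 => i.elim0) ⊗ₜ[A] m)
    (k : ℕ) (a : A) (x : RPow A F k) :
    Del k (a • x) = a • Del k x
      + castR (show 0 + k + 1 = k + 1 by omega) (mulv mul 0 k (T 0 (D a)) x) := by
  induction x using rpow_induction with
  | h0 =>
    have h1 : mulv mul 0 k (T 0 (D a)) (0 : RPow A F k) = 0 := by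
      show mul 0 k (T 0 (D a)) 0 (0 + k + 1) = 0
      rw [map_zero]; rfl
    rw [smul_zero, map_zero, smul_zero, h1, map_zero, add_zero]
  | hadd x y ihx ihy =>
    have h1 : mulv mul 0 k (T 0 (D a)) (x + y)
        = mulv mul 0 k (T 0 (D a)) x + mulv mul 0 k (T 0 (D a)) y := by
      show mul 0 k (T 0 (D a)) (x + y) (0 + k + 1) = _
      rw [map_add]; rfl
    rw [smul_add, map_add, ihx, ihy, map_add, smul_add, h1, map_add]
    abel
  | hgen m =>
    have hm'cast : ∀ i : Fin k,
        Function.update m (Fin.last k) (a • m (Fin.last k)) i.castSucc = m i.castSucc :=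
      fun i => Function.update_of_ne (Fin.ne_of_lt (Fin.castSucc_lt_last i)) _ m
    have hm'last : Function.update m (Fin.last k) (a • m (Fin.last k)) (Fin.last k)
        = a • m (Fin.last k) := Function.update_self _ _ m
    rw [mkR_smul_last, hDel, Fin.sum_univ_castSucc]
    have hfront : (∑ i : Fin k,
        ins k (Function.update m (Fin.last k) (a • m (Fin.last k))) i.castSucc
          (γ (Function.update m (Fin.last k) (a • m (Fin.last k)) i.castSucc)))
        = ∑ i : Fin k, a • ins k m i.castSucc (γ (m i.castSucc)) := by
      refine Finset.sum_congr rfl fun i _ => ?_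
      rw [hm'cast i, ins_castSucc_smul ins hins]
      rfl
    have hlast :
        ins k (Function.update m (Fin.last k) (a • m (Fin.last k))) (Fin.last k)
          (γ (Function.update m (Fin.last k) (a • m (Fin.last k)) (Fin.last k)))
        = ins k m (Fin.last k) ((D a) ⊗ₜ[A] m (Fin.last k))
          + a • ins k m (Fin.last k) (γ (m (Fin.last k))) := by
      rw [hm'last, ins_last_update ins hins, hγ, map_add, LinearMap.map_smul]
    rw [hfront, hlast, hDel, Fin.sum_univ_castSucc, mulv_T0_mkR D ins hins mul hmul T hT0,
      smul_add, Finset.smul_sum]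
    abel

end L1d
section L2a

variable {A F}

lemma appW_left {p q : ℕ} (w : Fin (p + 1) → F) (w' : Fin (q + 1) → F) (i : Fin (p + 1)) :
    appW w w' ⟨i.val, by have := i.isLt; omega⟩ = w i := by
  unfold appW
  rw [dif_pos i.isLt]

lemma appW_right {p q : ℕ} (w : Fin (p + 1) → F) (w' : Fin (q + 1) → F) (i : Fin (q + 1)) :
    appW w w' ⟨p + 1 + i.val, by have := i.isLt; omega⟩ = w' i := by
  unfold appW
  rw [dif_neg (show ¬(p + 1 + i.val < p + 1) from by omega)]
  exact congrArg w' (Fin.ext (show p + 1 + i.val - (p + 1) = i.val from by omega))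

section MulHelpers
variable (mul : ∀ p q, RPow A F p →ₗ[A] RPow A F q →ₗ[A] ∀ k, RPow A F k)

lemma mulv_zero_left (p q : ℕ) (y : RPow A F q) : mulv mul p q 0 y = 0 :=
  congrFun (mul_zero_left mul p q y) _

lemma mulv_add_left (p q : ℕ) (x1 x2 : RPow A F p) (y : RPow A F q) :
    mulv mul p q (x1 + x2) y = mulv mul p q x1 y + mulv mul p q x2 y :=
  congrFun (mul_add_left mul p q x1 x2 y) _

lemma mulv_zero_right (p q : ℕ) (x : RPow A F p) : mulv mul p q x 0 = 0 := by
  show mul p q x 0 (p + q + 1) = 0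
  rw [map_zero]; rfl

lemma mulv_add_right (p q : ℕ) (x : RPow A F p) (y1 y2 : RPow A F q) :
    mulv mul p q x (y1 + y2) = mulv mul p q x y1 + mulv mul p q x y2 := by
  show mul p q x (y1 + y2) (p + q + 1) = _
  rw [map_add]; rfl

lemma mulv_sum_left {ι : Type} (p q : ℕ) (s : Finset ι) (f : ι → RPow A F p) (y : RPow A F q) :
    mulv mul p q (∑ i ∈ s, f i) y = ∑ i ∈ s, mulv mul p q (f i) y := by
  show (mul p q).flip y (∑ i ∈ s, f i) (p + q + 1) = _
  rw [map_sum]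
  exact Finset.sum_apply _ _ _

lemma mulv_sum_right {ι : Type} (p q : ℕ) (s : Finset ι) (x : RPow A F p) (f : ι → RPow A F q) :
    mulv mul p q x (∑ i ∈ s, f i) = ∑ i ∈ s, mulv mul p q x (f i) := by
  show mul p q x (∑ i ∈ s, f i) (p + q + 1) = _
  rw [map_sum]
  exact Finset.sum_apply _ _ _

end MulHelpers

lemma ins_mul_left
    (ins : ∀ (k : ℕ) (m : Fin (k + 1) → F) (i : Fin (k + 1)), F ⊗[A] F →ₗ[A] RPow A F (k + 1))
    (hins : ∀ k m i u v, ins k m i (u ⊗ₜ[A] v) = mkR A F (insWord F m i u v))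
    (mul : ∀ p q, RPow A F p →ₗ[A] RPow A F q →ₗ[A] ∀ k, RPow A F k)
    (hmul : IsMulR A F mul)
    (p q : ℕ) (w : Fin (p + 1) → F) (w' : Fin (q + 1) → F) (i : Fin (p + 1)) (t : F ⊗[A] F) :
    castR (show p + 1 + q + 1 = p + q + 1 + 1 by omega)
        (mulv mul (p + 1) q (ins p w i t) (mkR A F w'))
      = ins (p + q + 1) (appW w w') ⟨i.val, by have := i.isLt; omega⟩ t := by
  have hi := i.isLt
  induction t using TensorProduct.induction_on with
  | zero => rw [map_zero, map_zero, mulv_zero_left, map_zero]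
  | add t1 t2 ih1 ih2 => rw [map_add, map_add, mulv_add_left, map_add, ih1, ih2]
  | tmul u v =>
    rw [hins, mulv_mkR mul hmul, castR_mkR, hins]
    congr 1
    funext x
    have hx := x.isLt
    simp only [appW, insWord, Fin.coe_cast]
    split_ifs <;> (try split_ifs) <;>
      first
        | rfl
        | omega
        | (exact congrArg w (Fin.ext (by simp; try omega)))
        | (exact congrArg w' (Fin.ext (by simp; try omega)))

lemma ins_mul_right
    (ins : ∀ (k : ℕ) (m : Fin (k + 1) → F) (i : Fin (k + 1)), F ⊗[A] F →ₗ[A] RPow A F (k + 1))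
    (hins : ∀ k m i u v, ins k m i (u ⊗ₜ[A] v) = mkR A F (insWord F m i u v))
    (mul : ∀ p q, RPow A F p →ₗ[A] RPow A F q →ₗ[A] ∀ k, RPow A F k)
    (hmul : IsMulR A F mul)
    (p q : ℕ) (w : Fin (p + 1) → F) (w' : Fin (q + 1) → F) (i : Fin (q + 1)) (t : F ⊗[A] F) :
    castR (show p + (q + 1) + 1 = p + q + 1 + 1 by omega)
        (mulv mul p (q + 1) (mkR A F w) (ins q w' i t))
      = ins (p + q + 1) (appW w w') ⟨p + 1 + i.val, by have := i.isLt; omega⟩ t := by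
  have hi := i.isLt
  induction t using TensorProduct.induction_on with
  | zero => rw [map_zero, map_zero, mulv_zero_right, map_zero]
  | add t1 t2 ih1 ih2 => rw [map_add, map_add, mulv_add_right, map_add, ih1, ih2]
  | tmul u v =>
    rw [hins, mulv_mkR mul hmul, castR_mkR, hins]
    congr 1
    funext x
    have hx := x.isLt
    simp only [appW, insWord, Fin.coe_cast]
    split_ifs <;> (try split_ifs) <;>
      first
        | rfl
        | omega
        | (exact congrArg w (Fin.ext (by simp; try omega)))
        | (exact congrArg w' (Fin.ext (by simp; try omega)))

end L2a
section L2b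

variable {A F}

lemma Del_mul
    (γ : F →+ F ⊗[A] F)
    (ins : ∀ (k : ℕ) (m : Fin (k + 1) → F) (i : Fin (k + 1)), F ⊗[A] F →ₗ[A] RPow A F (k + 1))
    (hins : ∀ k m i u v, ins k m i (u ⊗ₜ[A] v) = mkR A F (insWord F m i u v))
    (Del : ∀ k, RPow A F k →+ RPow A F (k + 1))
    (hDel : ∀ (k : ℕ) (m : Fin (k + 1) → F),
      Del k (mkR A F m) = ∑ i : Fin (k + 1), ins k m i (γ (m i)))
    (mul : ∀ p q, RPow A F p →ₗ[A] RPow A F q →ₗ[A] ∀ k, RPow A F k)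
    (hmul : IsMulR A F mul)
    (p q : ℕ) (x : RPow A F p) (y : RPow A F q) :
    Del (p + q + 1) (mulv mul p q x y)
      = castR (show p + 1 + q + 1 = p + q + 1 + 1 by omega) (mulv mul (p + 1) q (Del p x) y)
        + castR (show p + (q + 1) + 1 = p + q + 1 + 1 by omega)
            (mulv mul p (q + 1) x (Del q y)) := by
  induction x using rpow_induction with
  | h0 =>
    rw [mulv_zero_left, map_zero, map_zero, mulv_zero_left, map_zero, zero_add,
      mulv_zero_left, map_zero]
  | hadd x1 x2 ih1 ih2 =>
    rw [mulv_add_left, map_add, ih1, ih2, map_add, mulv_add_left, map_add,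
      mulv_add_left, map_add]
    abel
  | hgen w =>
    induction y using rpow_induction with
    | h0 =>
      rw [mulv_zero_right, map_zero, map_zero, mulv_zero_right, map_zero, zero_add,
        mulv_zero_right, map_zero]
    | hadd y1 y2 ih1 ih2 =>
      rw [mulv_add_right, map_add, ih1, ih2, map_add, mulv_add_right, map_add,
        mulv_add_right, map_add]
      abel
    | hgen w' =>
      set G : ℕ → RPow A F (p + q + 1 + 1) := fun n =>
        if h : n < p + q + 2 then
          ins (p + q + 1) (appW w w') ⟨n, h⟩ (γ (appW w w' ⟨n, h⟩))
        else 0 with hG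
      have hLHS : Del (p + q + 1) (mulv mul p q (mkR A F w) (mkR A F w'))
          = ∑ n ∈ Finset.range (p + q + 2), G n := by
        rw [mulv_mkR mul hmul, hDel, ← Fin.sum_univ_eq_sum_range G (p + q + 2)]
        refine Finset.sum_congr rfl fun i _ => ?_
        simp only [hG]
        rw [dif_pos i.isLt]
        try simp only [Fin.eta]
      have hR1 : castR (show p + 1 + q + 1 = p + q + 1 + 1 by omega)
            (mulv mul (p + 1) q (Del p (mkR A F w)) (mkR A F w'))
          = ∑ n ∈ Finset.range (p + 1), G n := by
        rw [hDel, mulv_sum_left, map_sum, ← Fin.sum_univ_eq_sum_range G (p + 1)]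
        refine Finset.sum_congr rfl fun i _ => ?_
        rw [ins_mul_left ins hins mul hmul]
        simp only [hG]
        rw [dif_pos (show i.val < p + q + 2 by have := i.isLt; omega)]
        rw [appW_left]
      have hR2 : castR (show p + (q + 1) + 1 = p + q + 1 + 1 by omega)
            (mulv mul p (q + 1) (mkR A F w) (Del q (mkR A F w')))
          = ∑ n ∈ Finset.range (q + 1), G (p + 1 + n) := by
        rw [hDel, mulv_sum_right, map_sum,
          ← Fin.sum_univ_eq_sum_range (fun n => G (p + 1 + n)) (q + 1)]
        refine Finset.sum_congr rfl fun i _ => ?_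
        rw [ins_mul_right ins hins mul hmul]
        simp only [hG]
        rw [dif_pos (show p + 1 + i.val < p + q + 2 by have := i.isLt; omega)]
        rw [appW_right]
      rw [hLHS, hR1, hR2]
      have h1 : ∑ n ∈ Finset.Ico 0 (p + q + 2), G n
          = (∑ n ∈ Finset.Ico 0 (p + 1), G n) + ∑ n ∈ Finset.Ico (p + 1) (p + q + 2), G n :=
        (Finset.sum_Ico_consecutive G (Nat.zero_le _) (by omega)).symm
      have h2 : ∑ n ∈ Finset.Ico (p + 1) (p + q + 2), G n
          = ∑ n ∈ Finset.range (p + q + 2 - (p + 1)), G (p + 1 + n) :=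
        Finset.sum_Ico_eq_sum_range G (p + 1) (p + q + 2)
      rw [Finset.range_eq_Ico, h1, h2, show p + q + 2 - (p + 1) = q + 1 by omega,
        ← Finset.range_eq_Ico]

end L2b
section Scalars

variable {A F} [Algebra ℚ A] {B : Type} [CommRing B] [Algebra B A]
  [Module B F] [IsScalarTower B A F]

lemma castR_castR {n1 n2 n3 : ℕ} (h1 : n1 = n2) (h2 : n2 = n3) (x : RPow A F n1) :
    castR h2 (castR h1 x) = castR (h1.trans h2) x := by
  subst h1; subst h2; rfl

lemma mulv_smul_left (mul : ∀ p q, RPow A F p →ₗ[A] RPow A F q →ₗ[A] ∀ k, RPow A F k)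
    (p q : ℕ) (c : A) (x : RPow A F p) (y : RPow A F q) :
    mulv mul p q (c • x) y = c • mulv mul p q x y := by
  show mul p q (c • x) y (p + q + 1) = _
  rw [map_smul]
  rfl

lemma mulv_smul_right (mul : ∀ p q, RPow A F p →ₗ[A] RPow A F q →ₗ[A] ∀ k, RPow A F k)
    (p q : ℕ) (c : A) (x : RPow A F p) (y : RPow A F q) :
    mulv mul p q x (c • y) = c • mulv mul p q x y := by
  show mul p q x (c • y) (p + q + 1) = _
  rw [map_smul]
  rfl

lemma mulvT_congr (mul : ∀ p q, RPow A F p →ₗ[A] RPow A F q →ₗ[A] ∀ k, RPow A F k)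
    (T : ∀ i, F →+ RPow A F i) {p p' q q' n : ℕ} (hp : p = p') (hq : q = q')
    (h : p + q + 1 = n) (h' : p' + q' + 1 = n) (x y : F) :
    castR h (mulv mul p q (T p x) (T q y)) = castR h' (mulv mul p' q' (T p' x) (T q' y)) := by
  subst hp; subst hq; rfl

lemma T0_smul (T : ∀ i, F →+ RPow A F i)
    (hT0 : ∀ m : F, T 0 m = mkS A F (fun i : Fin 0 => i.elim0) ⊗ₜ[A] m) (a : A) (m : F) :
    T 0 (a • m) = a • T 0 m := by
  rw [hT0, hT0, TensorProduct.tmul_smul]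

lemma Del_rat_smul
    (D : Derivation B A F)
    (γ : F →+ F ⊗[A] F)
    (hγ : ∀ (a : A) (m : F), γ (a • m) = D a ⊗ₜ[A] m + a • γ m)
    (ins : ∀ (k : ℕ) (m : Fin (k + 1) → F) (i : Fin (k + 1)), F ⊗[A] F →ₗ[A] RPow A F (k + 1))
    (hins : ∀ k m i u v, ins k m i (u ⊗ₜ[A] v) = mkR A F (insWord F m i u v))
    (Del : ∀ k, RPow A F k →+ RPow A F (k + 1))
    (hDel : ∀ (k : ℕ) (m : Fin (k + 1) → F),
      Del k (mkR A F m) = ∑ i : Fin (k + 1), ins k m i (γ (m i)))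
    (mul : ∀ p q, RPow A F p →ₗ[A] RPow A F q →ₗ[A] ∀ k, RPow A F k)
    (hmul : IsMulR A F mul)
    (T : ∀ i, F →+ RPow A F i)
    (hT0 : ∀ m : F, T 0 m = mkS A F (fun i : Fin 0 => i.elim0) ⊗ₜ[A] m)
    (k : ℕ) (r : ℚ) (x : RPow A F k) :
    Del k (algebraMap ℚ A r • x) = algebraMap ℚ A r • Del k x := by
  rw [Del_smul D γ hγ ins hins Del hDel mul hmul T hT0, D_alg D r, map_zero,
    mulv_zero_left, map_zero, add_zero]

lemma Del_T
    (Del : ∀ k, RPow A F k →+ RPow A F (k + 1))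
    (T : ∀ i, F →+ RPow A F i)
    (hTsucc : ∀ (i : ℕ) (m : F),
      T (i + 1) m = algebraMap ℚ A (1 / (i + 1 : ℚ)) • Del i (T i m))
    (i : ℕ) (x : F) :
    Del i (T i x) = algebraMap ℚ A ((i : ℚ) + 1) • T (i + 1) x := by
  rw [hTsucc i x, smul_smul, ← map_mul, mul_one_div,
    div_self (by exact_mod_cast Nat.succ_ne_zero i), map_one, one_smul]

lemma single_cast {i j : ℕ} (h : i = j) (x : RPow A F i) :
    (Pi.single i x : ∀ k, RPow A F k) = Pi.single j (castR h x) := by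
  subst h; rfl

lemma sum_Icc_one_eq_sum_range {M : Type} [AddCommMonoid M] (f : ℕ → M) (N : ℕ) :
    ∑ j ∈ Finset.Icc 1 N, f j = ∑ j ∈ Finset.range N, f (j + 1) := by
  rw [← Finset.Ico_add_one_right_eq_Icc, Finset.sum_Ico_eq_sum_range]
  exact Finset.sum_congr rfl fun k _ => by rw [Nat.add_comm]

end Scalars
set_option maxHeartbeats 1000000

section MainClaim

variable {A F} [Algebra ℚ A] {B : Type} [CommRing B] [Algebra B A]
  [Module B F] [IsScalarTower B A F]

/-- The `j`-th product term `T_{j-1}(x)·T_{i-j}(m)`, transported to `R^{i+1}(F)`. -/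
def Ei (mul : ∀ p q, RPow A F p →ₗ[A] RPow A F q →ₗ[A] ∀ k, RPow A F k)
    (T : ∀ i, F →+ RPow A F i) (x m : F) (i j : ℕ) : RPow A F i :=
  if h : 1 ≤ j ∧ j ≤ i then
    castR (show j - 1 + (i - j) + 1 = i by omega)
      (mulv mul (j - 1) (i - j) (T (j - 1) x) (T (i - j) m))
  else 0

lemma Ei_eq (mul : ∀ p q, RPow A F p →ₗ[A] RPow A F q →ₗ[A] ∀ k, RPow A F k)
    (T : ∀ i, F →+ RPow A F i) (x m : F) {i j : ℕ} (h1 : 1 ≤ j) (h2 : j ≤ i) :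
    Ei mul T x m i j
      = castR (show j - 1 + (i - j) + 1 = i by omega)
          (mulv mul (j - 1) (i - j) (T (j - 1) x) (T (i - j) m)) := by
  unfold Ei
  rw [dif_pos ⟨h1, h2⟩]

lemma claim_val
    (D : Derivation B A F)
    (γ : F →+ F ⊗[A] F)
    (hγ : ∀ (a : A) (m : F), γ (a • m) = D a ⊗ₜ[A] m + a • γ m)
    (ins : ∀ (k : ℕ) (m : Fin (k + 1) → F) (i : Fin (k + 1)), F ⊗[A] F →ₗ[A] RPow A F (k + 1))
    (hins : ∀ k m i u v, ins k m i (u ⊗ₜ[A] v) = mkR A F (insWord F m i u v))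
    (Del : ∀ k, RPow A F k →+ RPow A F (k + 1))
    (hDel : ∀ (k : ℕ) (m : Fin (k + 1) → F),
      Del k (mkR A F m) = ∑ i : Fin (k + 1), ins k m i (γ (m i)))
    (mul : ∀ p q, RPow A F p →ₗ[A] RPow A F q →ₗ[A] ∀ k, RPow A F k)
    (hmul : IsMulR A F mul)
    (T : ∀ i, F →+ RPow A F i)
    (hT0 : ∀ m : F, T 0 m = mkS A F (fun i : Fin 0 => i.elim0) ⊗ₜ[A] m)
    (hTsucc : ∀ (i : ℕ) (m : F),
      T (i + 1) m = algebraMap ℚ A (1 / (i + 1 : ℚ)) • Del i (T i m))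
    (a : A) (m : F) :
    ∀ (i : ℕ), 1 ≤ i →
      T i (a • m) = a • T i m
        + ∑ j ∈ Finset.Icc 1 i,
            algebraMap ℚ A (1 / (j : ℚ)) • Ei mul T (D a) m i j := by
  intro i hi
  induction i, hi using Nat.le_induction with
  | base =>
    rw [Finset.Icc_self, Finset.sum_singleton]
    have hE : Ei mul T (D a) m 1 1
        = castR (show 0 + 0 + 1 = 1 by omega) (mulv mul 0 0 (T 0 (D a)) (T 0 m)) := by
      rw [Ei_eq mul T (D a) m (le_refl 1) (le_refl 1)]
      try refine' mulvT_congr mul T ?_ ?_ _ _ _ _ <;> omega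
    rw [hE, show (1 / ((1 : ℕ) : ℚ)) = 1 by norm_num, map_one, one_smul]
    show T (0 + 1) (a • m) = a • T (0 + 1) m + _
    rw [hTsucc 0 (a • m), hTsucc 0 m,
      show (1 / (((0 : ℕ) : ℚ) + 1)) = 1 by norm_num, map_one, one_smul, one_smul,
      T0_smul T hT0, Del_smul D γ hγ ins hins Del hDel mul hmul T hT0]
  | succ i hi IH =>
    have hine : ((i : ℚ) + 1) ≠ 0 := by exact_mod_cast Nat.succ_ne_zero i
    -- rewrite the left-hand side
    rw [hTsucc i (a • m), IH, map_add, Del_smul D γ hγ ins hins Del hDel mul hmul T hT0,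
      Del_T Del T hTsucc, map_sum]
    -- rewrite each summand
    have hsum : ∑ j ∈ Finset.Icc 1 i,
        Del i (algebraMap ℚ A (1 / (j : ℚ)) • Ei mul T (D a) m i j)
        = ∑ j ∈ Finset.Icc 1 i,
            (Ei mul T (D a) m (i + 1) (j + 1)
              + algebraMap ℚ A ((((i - j : ℕ) : ℚ) + 1) / (j : ℚ))
                  • Ei mul T (D a) m (i + 1) j) := by
      refine Finset.sum_congr rfl fun j hj => ?_
      obtain ⟨hj1, hj2⟩ := Finset.mem_Icc.mp hj
      rw [Del_rat_smul D γ hγ ins hins Del hDel mul hmul T hT0]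
      have hDE : Del i (Ei mul T (D a) m i j)
          = algebraMap ℚ A (((j - 1 : ℕ) : ℚ) + 1) • Ei mul T (D a) m (i + 1) (j + 1)
            + algebraMap ℚ A (((i - j : ℕ) : ℚ) + 1) • Ei mul T (D a) m (i + 1) j := by
        rw [Ei_eq mul T (D a) m hj1 hj2]
        rw [Del_cast, Del_mul γ ins hins Del hDel mul hmul, map_add, castR_castR, castR_castR,
          Del_T Del T hTsucc, Del_T Del T hTsucc, mulv_smul_left, mulv_smul_right,
          map_smul, map_smul]
        congr 1
        · congr 1
          rw [Ei_eq mul T (D a) m (show 1 ≤ j + 1 by omega) (show j + 1 ≤ i + 1 by omega)]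
          refine mulvT_congr mul T ?_ ?_ _ _ _ _ <;> omega
        · congr 1
          rw [Ei_eq mul T (D a) m hj1 (show j ≤ i + 1 by omega)]
          refine mulvT_congr mul T ?_ ?_ _ _ _ _ <;> omega
      rw [hDE, smul_add, smul_smul, smul_smul, ← map_mul, ← map_mul,
        show (1 / (j : ℚ)) * (((j - 1 : ℕ) : ℚ) + 1) = 1 by
          rw [Nat.cast_sub hj1]
          push_cast
          field_simp
          ring,
        map_one, one_smul,
        show (1 / (j : ℚ)) * (((i - j : ℕ) : ℚ) + 1) = (((i - j : ℕ) : ℚ) + 1) / (j : ℚ) by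
          ring]
    rw [hsum, Finset.sum_add_distrib]
    -- the X₀ term is the j = 1 term of the new sum
    have hE1 : castR (show 0 + i + 1 = i + 1 by omega) (mulv mul 0 i (T 0 (D a)) (T i m))
        = Ei mul T (D a) m (i + 1) 1 := by
      rw [Ei_eq mul T (D a) m (le_refl 1) (show 1 ≤ i + 1 by omega)]
      try refine' mulvT_congr mul T ?_ ?_ _ _ _ _ <;> omega
    rw [hE1]
    -- shift of index
    have hshift : Ei mul T (D a) m (i + 1) 1
          + ∑ j ∈ Finset.Icc 1 i, Ei mul T (D a) m (i + 1) (j + 1)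
        = ∑ j ∈ Finset.Icc 1 (i + 1), Ei mul T (D a) m (i + 1) j := by
      rw [sum_Icc_one_eq_sum_range (fun j => Ei mul T (D a) m (i + 1) j) (i + 1),
        Finset.sum_range_succ',
        sum_Icc_one_eq_sum_range (fun j => Ei mul T (D a) m (i + 1) (j + 1)) i]
      exact add_comm _ _
    -- final algebra
    set c := algebraMap ℚ A (1 / ((i : ℚ) + 1)) with hc
    set E' : ℕ → RPow A F (i + 1) := fun j => Ei mul T (D a) m (i + 1) j with hE'
    have hTm0 : c • (algebraMap ℚ A ((i : ℚ) + 1) • T (i + 1) m) = T (i + 1) m := by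
      rw [smul_smul, hc, ← map_mul, one_div_mul_cancel hine, map_one, one_smul]
    have hTm : c • (a • (algebraMap ℚ A ((i : ℚ) + 1) • T (i + 1) m)) = a • T (i + 1) m := by
      rw [smul_comm c a, hTm0]
    have hsplit2 : ∑ j ∈ Finset.Icc 1 (i + 1), E' j
        = (∑ j ∈ Finset.Icc 1 i, E' j) + E' (i + 1) :=
      Finset.sum_Icc_succ_top (by omega) _
    have h8 : c • E' (i + 1) = algebraMap ℚ A (1 / ((i + 1 : ℕ) : ℚ)) • E' (i + 1) := by
      rw [hc]
      congr 2
      push_cast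
      ring
    have h9 : (∑ j ∈ Finset.Icc 1 i, c • E' j)
          + ∑ j ∈ Finset.Icc 1 i,
              c • (algebraMap ℚ A ((((i - j : ℕ) : ℚ) + 1) / (j : ℚ)) • E' j)
        = ∑ j ∈ Finset.Icc 1 i, algebraMap ℚ A (1 / (j : ℚ)) • E' j := by
      rw [← Finset.sum_add_distrib]
      refine Finset.sum_congr rfl fun j hj => ?_
      obtain ⟨hj1, hj2⟩ := Finset.mem_Icc.mp hj
      rw [smul_smul, ← add_smul, hc, ← map_mul, ← map_add]
      congr 1
      have hjne : (j : ℚ) ≠ 0 := by exact_mod_cast (by omega : j ≠ 0)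
      have hcast : ((i - j : ℕ) : ℚ) = (i : ℚ) - (j : ℚ) := Nat.cast_sub hj2
      refine congrArg (algebraMap ℚ A) ?_
      rw [hcast]
      field_simp
      try ring
      try exact Or.inl trivial
    have key : c • (E' 1 + ((∑ j ∈ Finset.Icc 1 i, E' (j + 1))
          + ∑ j ∈ Finset.Icc 1 i,
              algebraMap ℚ A ((((i - j : ℕ) : ℚ) + 1) / (j : ℚ)) • E' j))
        = (∑ j ∈ Finset.Icc 1 i, algebraMap ℚ A (1 / (j : ℚ)) • E' j)
          + algebraMap ℚ A (1 / ((i + 1 : ℕ) : ℚ)) • E' (i + 1) := by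
      rw [← add_assoc, hshift, hsplit2, smul_add, smul_add, Finset.smul_sum, Finset.smul_sum,
        h8, add_right_comm, h9]
    rw [smul_add, smul_add, add_assoc, ← smul_add, key, hTm,
      Finset.sum_Icc_succ_top (show 1 ≤ i + 1 by omega)
        (fun j => algebraMap ℚ A (1 / (j : ℚ)) • E' j)]

end MainClaim

/-- Let `γ` be a `D`-connection, `∇` (`Del`) the induced operator on
`R₊(F)`, and `T₀ := id_F`, `T_n := (1/n!)∇ⁿ|_F` (equivalently `T_{n+1} = (1/(n+1)) ∇ ∘ Tₙ`).
Then for every `i ≥ 1`, `a ∈ A`, `m ∈ F`: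
`T_i(am) = a T_i(m) + ∑_{j=1}^i (1/j) T_{j-1}(D a) T_{i-j}(m)`,
i.e. `(T₀, T₁, …)` is an extended `D`-connection. -/
theorem iterate_isExtConn [Algebra ℚ A] (B : Type) [CommRing B] [Algebra B A]
    [Module B F] [IsScalarTower B A F]
    (D : Derivation B A F)
    (γ : F →+ F ⊗[A] F)
    (hγ : ∀ (a : A) (m : F), γ (a • m) = D a ⊗ₜ[A] m + a • γ m)
    (ins : ∀ (k : ℕ) (m : Fin (k + 1) → F) (i : Fin (k + 1)),
      F ⊗[A] F →ₗ[A] RPow A F (k + 1))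
    (hins : ∀ k m i u v, ins k m i (u ⊗ₜ[A] v) = mkR A F (insWord F m i u v))
    (Del : ∀ k, RPow A F k →+ RPow A F (k + 1))
    (hDel : ∀ (k : ℕ) (m : Fin (k + 1) → F),
      Del k (mkR A F m) = ∑ i : Fin (k + 1), ins k m i (γ (m i)))
    (mul : ∀ p q, RPow A F p →ₗ[A] RPow A F q →ₗ[A] ∀ k, RPow A F k)
    (hmul : IsMulR A F mul)
    (T : ∀ i, F →+ RPow A F i)
    (hT0 : ∀ m : F, T 0 m = mkS A F (fun i : Fin 0 => i.elim0) ⊗ₜ[A] m)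
    (hTsucc : ∀ (i : ℕ) (m : F),
      T (i + 1) m = algebraMap ℚ A (1 / (i + 1 : ℚ)) • Del i (T i m)) :
    IsExtConn A F (⇑D) mul T := by
  refine ⟨hT0, fun i hi a m => ?_⟩
  have hval := claim_val D γ hγ ins hins Del hDel mul hmul T hT0 hTsucc a m i hi
  rw [hval, Pi.single_add]
  congr 1
  rw [show (Pi.single i (∑ j ∈ Finset.Icc 1 i,
        algebraMap ℚ A (1 / (j : ℚ)) • Ei mul T (D a) m i j) : ∀ k, RPow A F k)
      = ∑ j ∈ Finset.Icc 1 i,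
          Pi.single i (algebraMap ℚ A (1 / (j : ℚ)) • Ei mul T (D a) m i j) from
    map_sum (LinearMap.single A (fun k => RPow A F k) i) _ _]
  refine Finset.sum_congr rfl fun j hj => ?_
  obtain ⟨hj1, hj2⟩ := Finset.mem_Icc.mp hj
  rw [Pi.single_smul, Ei_eq mul T (D a) m hj1 hj2,
    ← single_cast (show j - 1 + (i - j) + 1 = i by omega), ← mul_single mul hmul]

end
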